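/- Let P̂ be an m×m doubly stochastic matrix and let P̂⋆ = lim_{t→∞} (1/t)∑_{τ=0}^{t−1} P̂^τ (the Cesàro limit, which exists). Define τ⋆ = sup_{t≥0} ‖∑_{τ=0}^t (P̂^τ − P̂⋆)‖, where ‖·‖ is the operator norm induced by the scaled Euclidean norm ‖x‖ = ‖x‖₂/√m. Then for any γ ∈ (0,1) and any vector ŷ with ‖ŷ‖ ≤ 1, ‖∑_{τ=0}^∞ γ(1−γ)^τ P̂^τ ŷ − P̂⋆ ŷ‖ ≤ γ·τ⋆. -/

import Mathlib

open Filter Finset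

set_option maxHeartbeats 1000000

/-- The scaled Euclidean norm ‖x‖₂/√m on ℝ^m. -/
noncomputable def scaledNorm (m : ℕ) (x : Fin m → ℝ) : ℝ :=
  Real.sqrt ((∑ i, (x i) ^ 2) / m)

lemma scaledNorm_eq_norm (m : ℕ) (x : Fin m → ℝ) :
    scaledNorm m x
      = ‖(PiLp.continuousLinearEquiv 2 ℝ (fun _ : Fin m => ℝ)).symm x‖ / Real.sqrt m := by
  rw [scaledNorm, EuclideanSpace.norm_eq, Real.sqrt_div (by positivity)]
  congr 2
  refine Finset.sum_congr rfl fun i _ => ?_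
  rw [show ((PiLp.continuousLinearEquiv 2 ℝ (fun _ : Fin m => ℝ)).symm x) i = x i from rfl]
  simp [Real.norm_eq_abs, sq_abs]

/-- Lemma (eq. mubetaybar): ‖∑_τ γ(1−γ)^τ P̂^τ ŷ − P̂⋆ ŷ‖ ≤ γ·τ⋆. -/
theorem stmt_15 (m : ℕ) (hm : 1 ≤ m)
    (P : Matrix (Fin m) (Fin m) ℝ)
    (hnonneg : ∀ i j, 0 ≤ P i j)
    (hrow : ∀ i, ∑ j, P i j = 1) (hcol : ∀ j, ∑ i, P i j = 1)
    (Pstar : Matrix (Fin m) (Fin m) ℝ)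
    (hces : Tendsto (fun t : ℕ => (t : ℝ)⁻¹ • ∑ τ ∈ range t, P ^ τ)
      atTop (nhds Pstar))
    (τstar : ℝ)
    (hτ : ∀ t : ℕ, ∀ x : Fin m → ℝ,
      scaledNorm m ((∑ τ ∈ range (t + 1), (P ^ τ - Pstar)).mulVec x)
        ≤ τstar * scaledNorm m x)
    (γ : ℝ) (hγ0 : 0 < γ) (hγ1 : γ < 1)
    (yhat : Fin m → ℝ) (hy : scaledNorm m yhat ≤ 1) :
    scaledNorm m
      ((∑' τ : ℕ, (γ * (1 - γ) ^ τ) • (P ^ τ).mulVec yhat) - Pstar.mulVec yhat)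
      ≤ γ * τstar := by
  set L := (PiLp.continuousLinearEquiv 2 ℝ (fun _ : Fin m => ℝ)).symm with hL
  have hsm : (0:ℝ) < Real.sqrt m := Real.sqrt_pos.mpr (by exact_mod_cast hm)
  have hnorm : ∀ x : Fin m → ℝ, ‖L x‖ = Real.sqrt m * scaledNorm m x := by
    intro x
    rw [scaledNorm_eq_norm]
    field_simp
    rfl
  -- τstar ≥ 0
  have hτ0 : 0 ≤ τstar := by
    have h := hτ 0 (fun _ => 1)
    have hm0 : (m:ℝ) ≠ 0 := Nat.cast_ne_zero.mpr (by omega)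
    have h1 : scaledNorm m (fun _ : Fin m => (1:ℝ)) = 1 := by
      simp [scaledNorm, div_self hm0]
    rw [h1, mul_one] at h
    exact le_trans (Real.sqrt_nonneg _) h
  have hg1 : (0:ℝ) ≤ 1 - γ := by linarith
  have hg2 : (1:ℝ) - γ < 1 := by linarith
  set a : ℕ → ℝ := fun τ => γ * (1 - γ) ^ τ with ha
  have ha_nonneg : ∀ τ, 0 ≤ a τ := fun τ => mul_nonneg hγ0.le (pow_nonneg hg1 τ)
  set w : ℕ → EuclideanSpace ℝ (Fin m) :=
    fun t => L ((∑ τ ∈ range (t + 1), (P ^ τ - Pstar)).mulVec yhat) with hwdef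
  set u : ℕ → EuclideanSpace ℝ (Fin m) :=
    fun τ => L ((P ^ τ - Pstar).mulVec yhat) with hudef
  have hC : (0:ℝ) ≤ Real.sqrt m * τstar := mul_nonneg hsm.le hτ0
  have hw : ∀ t, ‖w t‖ ≤ Real.sqrt m * τstar := by
    intro t
    rw [hwdef, hnorm]
    exact mul_le_mul_of_nonneg_left
      (le_trans (hτ t yhat) (by nlinarith [hτ 0 yhat, Real.sqrt_nonneg ((∑ i, yhat i ^ 2)/m)]))
      hsm.le
  have hwu : ∀ τ, u (τ + 1) = w (τ + 1) - w τ := by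
    intro τ
    rw [hudef, hwdef]
    simp only
    rw [Finset.sum_range_succ, Matrix.add_mulVec, map_add]
    abel
  have hu0 : u 0 = w 0 := by
    rw [hudef, hwdef]
    simp only [zero_add, Finset.sum_range_one]
  have hu : ∀ τ, ‖u τ‖ ≤ 2 * (Real.sqrt m * τstar) := by
    intro τ
    cases τ with
    | zero => rw [hu0]; nlinarith [hw 0]
    | succ n =>
      rw [hwu n]
      calc ‖w (n+1) - w n‖ ≤ ‖w (n+1)‖ + ‖w n‖ := norm_sub_le _ _
        _ ≤ 2 * (Real.sqrt m * τstar) := by nlinarith [hw (n+1), hw n]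
  -- summabilities
  have hsa : Summable a := (summable_geometric_of_lt_one hg1 hg2).mul_left γ
  have hsu : Summable (fun τ => a τ • u τ) := by
    refine Summable.of_norm_bounded (g := fun τ => a τ * (2 * (Real.sqrt m * τstar)))
      (hsa.mul_right _) (fun τ => ?_)
    rw [norm_smul, Real.norm_eq_abs, abs_of_nonneg (ha_nonneg τ)]
    exact mul_le_mul_of_nonneg_left (hu τ) (ha_nonneg τ)
  have hsw : Summable (fun τ => (γ * a τ) • w τ) := by
    refine Summable.of_norm_bounded (g := fun τ => (γ * a τ) * (Real.sqrt m * τstar))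
      ((hsa.mul_left γ).mul_right _) (fun τ => ?_)
    rw [norm_smul, Real.norm_eq_abs, abs_of_nonneg (mul_nonneg hγ0.le (ha_nonneg τ))]
    exact mul_le_mul_of_nonneg_left (hw τ) (mul_nonneg hγ0.le (ha_nonneg τ))
  -- Abel summation identity on partial sums
  have hAbel : ∀ n, ∑ τ ∈ range (n + 1), a τ • u τ
      = (∑ τ ∈ range (n + 1), (γ * a τ) • w τ) + a (n + 1) • w n := by
    intro n
    induction n with
    | zero =>
      simp only [zero_add, range_one, sum_singleton, hu0]
      rw [← add_smul]
      congr 1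
      simp only [ha]
      ring
    | succ n ih =>
      rw [Finset.sum_range_succ (f := fun τ => a τ • u τ), ih]
      conv_rhs => rw [Finset.sum_range_succ]
      have hc : γ * a (n + 1) + a (n + 2) = a (n + 1) := by
        simp only [ha]; ring
      have key : a (n + 1) • w n + a (n + 1) • u (n + 1)
          = (γ * a (n + 1)) • w (n + 1) + a (n + 2) • w (n + 1) := by
        rw [hwu n, smul_sub, ← add_smul, hc]
        abel
      rw [add_assoc, key, ← add_assoc]
  -- tail tends to zero
  have htail : Tendsto (fun n => a (n + 1) • w n) atTop (nhds 0) := by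
    have h0 : Tendsto a atTop (nhds 0) := by
      simpa using (tendsto_pow_atTop_nhds_zero_of_lt_one hg1 hg2).const_mul γ
    have h1 : Tendsto (fun n : ℕ => a (n + 1) * (Real.sqrt m * τstar)) atTop (nhds 0) := by
      simpa using (h0.comp (tendsto_add_atTop_nat 1)).mul_const (Real.sqrt m * τstar)
    refine squeeze_zero_norm (fun n => ?_) h1
    rw [norm_smul, Real.norm_eq_abs, abs_of_nonneg (ha_nonneg _)]
    exact mul_le_mul_of_nonneg_left (hw n) (ha_nonneg _)
  -- the two series agree
  have hAB : (∑' τ, a τ • u τ) = ∑' τ, (γ * a τ) • w τ := by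
    have h1 : Tendsto (fun n : ℕ => ∑ τ ∈ range (n + 1), a τ • u τ) atTop
        (nhds (∑' τ, a τ • u τ)) :=
      (hsu.hasSum.tendsto_sum_nat).comp (tendsto_add_atTop_nat 1)
    have h2 : Tendsto (fun n : ℕ => (∑ τ ∈ range (n + 1), (γ * a τ) • w τ) + a (n + 1) • w n)
        atTop (nhds ((∑' τ, (γ * a τ) • w τ) + 0)) :=
      ((hsw.hasSum.tendsto_sum_nat).comp (tendsto_add_atTop_nat 1)).add htail
    rw [add_zero] at h2
    have h1' : Tendsto (fun n : ℕ => (∑ τ ∈ range (n + 1), (γ * a τ) • w τ) + a (n + 1) • w n)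
        atTop (nhds (∑' τ, a τ • u τ)) := by
      refine h1.congr fun n => ?_
      exact hAbel n
    exact tendsto_nhds_unique h1' h2
  -- identify the goal vector with ∑' a τ • u τ
  set p : EuclideanSpace ℝ (Fin m) := L (Pstar.mulVec yhat) with hp
  have hq : ∀ τ : ℕ, L ((a τ) • (P ^ τ).mulVec yhat) = a τ • u τ + a τ • p := by
    intro τ
    have hd : (P ^ τ).mulVec yhat = (P ^ τ - Pstar).mulVec yhat + Pstar.mulVec yhat := by
      rw [Matrix.sub_mulVec]; abel
    rw [map_smul, hd, map_add, smul_add]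
  have hsp : Summable (fun τ => a τ • p) := hsa.smul_const p
  have hsa1 : ∑' τ : ℕ, a τ = 1 := by
    have : ∑' τ : ℕ, γ * (1 - γ) ^ τ = γ * (1 - (1 - γ))⁻¹ := by
      rw [tsum_mul_left, tsum_geometric_of_lt_one hg1 hg2]
    simp only [ha, this, sub_sub_cancel]
    exact mul_inv_cancel₀ hγ0.ne'
  have hEq1 : L ((∑' τ : ℕ, (γ * (1 - γ) ^ τ) • (P ^ τ).mulVec yhat) - Pstar.mulVec yhat)
      = ∑' τ, a τ • u τ := by
    rw [map_sub, ContinuousLinearEquiv.map_tsum]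
    have ht : ∑' τ : ℕ, L ((γ * (1 - γ) ^ τ) • (P ^ τ).mulVec yhat)
        = ∑' τ : ℕ, (a τ • u τ + a τ • p) := tsum_congr fun τ => hq τ
    rw [ht, Summable.tsum_add hsu hsp, Summable.tsum_smul_const hsa p, hsa1, one_smul]
    exact add_sub_cancel_right _ _
  -- final estimate
  have hbw : ∀ τ : ℕ, ‖(γ * a τ) • w τ‖ ≤ (γ * (Real.sqrt m * τstar)) * a τ := by
    intro τ
    rw [norm_smul, Real.norm_eq_abs, abs_of_nonneg (mul_nonneg hγ0.le (ha_nonneg τ))]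
    calc γ * a τ * ‖w τ‖ ≤ γ * a τ * (Real.sqrt m * τstar) :=
          mul_le_mul_of_nonneg_left (hw τ) (mul_nonneg hγ0.le (ha_nonneg τ))
      _ = (γ * (Real.sqrt m * τstar)) * a τ := by ring
  have hb1 : Summable (fun τ => ‖(γ * a τ) • w τ‖) :=
    Summable.of_nonneg_of_le (fun τ => norm_nonneg _) hbw (hsa.mul_left _)
  have hnormle : ‖∑' τ, (γ * a τ) • w τ‖ ≤ γ * (Real.sqrt m * τstar) := by
    calc ‖∑' τ, (γ * a τ) • w τ‖ ≤ ∑' τ, ‖(γ * a τ) • w τ‖ := norm_tsum_le_tsum_norm hb1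
      _ ≤ ∑' τ, (γ * (Real.sqrt m * τstar)) * a τ :=
          Summable.tsum_le_tsum hbw hb1 (hsa.mul_left _)
      _ = (γ * (Real.sqrt m * τstar)) * ∑' τ, a τ := tsum_mul_left
      _ = γ * (Real.sqrt m * τstar) := by rw [hsa1, mul_one]
  have hgoal : scaledNorm m
      ((∑' τ : ℕ, (γ * (1 - γ) ^ τ) • (P ^ τ).mulVec yhat) - Pstar.mulVec yhat)
      = ‖L ((∑' τ : ℕ, (γ * (1 - γ) ^ τ) • (P ^ τ).mulVec yhat) - Pstar.mulVec yhat)‖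
        / Real.sqrt m := by
    rw [hnorm]
    field_simp
  rw [hgoal, hEq1, hAB]
  rw [div_le_iff₀ hsm]
  calc ‖∑' τ, (γ * a τ) • w τ‖ ≤ γ * (Real.sqrt m * τstar) := hnormle
    _ = γ * τstar * Real.sqrt m := by ring
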